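/- Let ℓ ≥ 1 and define the ℓ×ℓ matrix Ω by Ω_{i,j} = 2cos(2π(i−1)(2j−1)/(4ℓ)) for 1 ≤ i,j ≤ ℓ. Then (det Ω)² = 2·(2ℓ)^ℓ. -/

import Mathlib

open Real Finset Matrix

-- key sum: ∑_{j<ℓ} cos(mπ(2j+1)/(2ℓ)) = 0 for 0 < m < 2ℓ
lemma keySum (ℓ : ℕ) (hℓ : 1 ≤ ℓ) (m : ℕ) (hm0 : 0 < m) (hm : m < 2 * ℓ) :
    ∑ j ∈ Finset.range ℓ, Real.cos (m * (π * (2 * j + 1) / (2 * ℓ))) = 0 := by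
  have hℓ' : (0:ℝ) < ℓ := by exact_mod_cast hℓ
  have hm0' : (0:ℝ) < m := by exact_mod_cast hm0
  have hspos : 0 < Real.sin (m * π / (2 * ℓ)) := by
    apply Real.sin_pos_of_pos_of_lt_pi
    · positivity
    · rw [div_lt_iff₀ (by positivity)]
      have : (m:ℝ) < 2*ℓ := by exact_mod_cast hm
      nlinarith [Real.pi_pos]
  have key : ∀ j : ℕ, Real.cos (m * (π * (2 * j + 1) / (2 * ℓ))) * (2 * Real.sin (m * π / (2 * ℓ))) =
      Real.sin (m * π * (j+1) / ℓ) - Real.sin (m * π * j / ℓ) := by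
    intro j
    rw [Real.sin_sub_sin]
    have h1 : (m * π * (j+1) / ℓ - m * π * j / ℓ) / 2 = m * π / (2 * ℓ) := by
      field_simp; ring
    have h2 : (m * π * (j+1) / ℓ + m * π * j / ℓ) / 2 = m * (π * (2 * j + 1) / (2 * ℓ)) := by
      field_simp; ring
    rw [h1, h2]; ring
  have hsum : (∑ j ∈ Finset.range ℓ, Real.cos (m * (π * (2 * j + 1) / (2 * ℓ)))) *
      (2 * Real.sin (m * π / (2 * ℓ))) = 0 := by
    rw [Finset.sum_mul]
    have := Finset.sum_range_sub (fun j : ℕ => Real.sin (m * π * j / ℓ)) ℓ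
    simp only [key]
    push_cast at this
    rw [this]
    have hℓ0 : (ℓ:ℝ) ≠ 0 := ne_of_gt hℓ'
    have : (m:ℝ) * π * ℓ / ℓ = m * π := by field_simp
    rw [this]
    simp [Real.sin_nat_mul_pi]
  have := mul_eq_zero.mp hsum
  rcases this with h | h
  · exact h
  · exfalso; nlinarith

lemma keySum0 (ℓ : ℕ) :
    ∑ j ∈ Finset.range ℓ, Real.cos ((0:ℕ) * (π * (2 * j + 1) / (2 * ℓ))) = ℓ := by
  simp

-- full key: for m < 2ℓ
lemma keySum' (ℓ : ℕ) (hℓ : 1 ≤ ℓ) (m : ℕ) (hm : m < 2 * ℓ) :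
    ∑ j ∈ Finset.range ℓ, Real.cos (m * (π * (2 * j + 1) / (2 * ℓ))) =
      if m = 0 then (ℓ:ℝ) else 0 := by
  rcases Nat.eq_zero_or_pos m with h | h
  · subst h; simpa using keySum0 ℓ
  · rw [if_neg h.ne']
    exact keySum ℓ hℓ m h hm

lemma entrySum (ℓ : ℕ) (hℓ : 1 ≤ ℓ) (a b : ℕ) (hab : a ≤ b) (hb : b < ℓ) :
    ∑ j ∈ Finset.range ℓ,
      (2 * Real.cos (a * (π * (2 * j + 1) / (2 * ℓ)))) *
      (2 * Real.cos (b * (π * (2 * j + 1) / (2 * ℓ)))) =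
    if a = b then (if a = 0 then 4*(ℓ:ℝ) else 2*ℓ) else 0 := by
  have point : ∀ j : ℕ,
      (2 * Real.cos (a * (π * (2 * j + 1) / (2 * ℓ)))) *
      (2 * Real.cos (b * (π * (2 * j + 1) / (2 * ℓ)))) =
      2 * (Real.cos ((b - a : ℕ) * (π * (2 * j + 1) / (2 * ℓ)))
        + Real.cos ((a + b : ℕ) * (π * (2 * j + 1) / (2 * ℓ)))) := by
    intro j
    set θ := π * (2 * (j:ℝ) + 1) / (2 * ℓ) with hθ
    have hba : ((b - a : ℕ) : ℝ) = (b:ℝ) - a := by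
      push_cast [Nat.cast_sub hab]; ring
    have h1 : ((b - a : ℕ) : ℝ) * θ = (b:ℝ)*θ - (a:ℝ)*θ := by rw [hba]; ring
    have h2 : ((a + b : ℕ) : ℝ) * θ = (a:ℝ)*θ + (b:ℝ)*θ := by push_cast; ring
    rw [h1, h2, Real.cos_sub, Real.cos_add]
    ring
  rw [Finset.sum_congr rfl (fun j _ => point j), ← Finset.mul_sum, Finset.sum_add_distrib]
  rw [keySum' ℓ hℓ (b - a) (by omega), keySum' ℓ hℓ (a + b) (by omega)]
  rcases eq_or_ne a b with h | h
  · subst h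
    rcases eq_or_ne a 0 with h0 | h0
    · subst h0; simp; ring
    · simp [h0]
  · have h1 : b - a ≠ 0 := by omega
    have h2 : a + b ≠ 0 := by omega
    simp [h, h1, h2]; omega

theorem stmt_8 (ℓ : ℕ) (hℓ : 1 ≤ ℓ)
    (Ω : Matrix (Fin ℓ) (Fin ℓ) ℝ)
    (hΩ : ∀ i j, Ω i j = 2 * Real.cos (2 * π * i.val * (2 * j.val + 1) / (4 * ℓ))) :
    (Ω.det) ^ 2 = 2 * (2 * ℓ : ℝ) ^ ℓ := by
  have hℓ' : (0:ℝ) < ℓ := by exact_mod_cast hℓ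
  have hne : NeZero ℓ := ⟨by omega⟩
  have harg : ∀ (a : ℕ) (j : ℕ), 2 * π * (a:ℝ) * (2 * (j:ℕ) + 1) / (4 * ℓ)
      = (a:ℝ) * (π * (2 * (j:ℕ) + 1) / (2 * ℓ)) := by
    intro a j; field_simp; ring
  have main : ∀ a b : ℕ, a < ℓ → b < ℓ →
      ∑ j ∈ Finset.range ℓ,
        (2 * Real.cos (a * (π * (2 * j + 1) / (2 * ℓ)))) *
        (2 * Real.cos (b * (π * (2 * j + 1) / (2 * ℓ)))) =
      if a = b then (if a = 0 then 4*(ℓ:ℝ) else 2*ℓ) else 0 := by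
    intro a b ha hb
    rcases le_total a b with h | h
    · exact entrySum ℓ hℓ a b h hb
    · rw [Finset.sum_congr rfl (fun j _ => mul_comm _ _), entrySum ℓ hℓ b a h ha]
      rcases eq_or_ne a b with hab | hab
      · subst hab; rfl
      · rw [if_neg hab, if_neg (fun hh => hab hh.symm)]
  have hdiag : Ω * Ωᵀ = Matrix.diagonal
      (fun i : Fin ℓ => if (i:ℕ) = 0 then 4*(ℓ:ℝ) else 2*ℓ) := by
    ext i k
    rw [Matrix.mul_apply]
    simp only [Matrix.transpose_apply, hΩ]
    have conv1 : (∑ j : Fin ℓ, (2 * Real.cos (2 * π * i.val * (2 * (j:Fin ℓ).val + 1) / (4 * ℓ))) *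
        (2 * Real.cos (2 * π * k.val * (2 * (j:Fin ℓ).val + 1) / (4 * ℓ)))) =
        ∑ j ∈ Finset.range ℓ, (2 * Real.cos ((i.val:ℝ) * (π * (2 * j + 1) / (2 * ℓ)))) *
        (2 * Real.cos ((k.val:ℝ) * (π * (2 * j + 1) / (2 * ℓ)))) := by
      rw [← Fin.sum_univ_eq_sum_range]
      refine Finset.sum_congr rfl fun j _ => ?_
      rw [harg, harg]
    rw [conv1, main i.val k.val i.isLt k.isLt, Matrix.diagonal_apply]
    rcases eq_or_ne i k with hik | hik
    · subst hik; simp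
    · rw [if_neg hik, if_neg (fun hh => hik (Fin.ext hh))]
  have hdet : Ω.det ^ 2 = (Ω * Ωᵀ).det := by
    rw [Matrix.det_mul, Matrix.det_transpose, sq]
  rw [hdet, hdiag, Matrix.det_diagonal]
  have h0 : (0 : Fin ℓ) ∈ (Finset.univ : Finset (Fin ℓ)) := Finset.mem_univ _
  rw [← Finset.mul_prod_erase _ _ h0]
  have hv0 : ((0 : Fin ℓ) : ℕ) = 0 := rfl
  rw [hv0, if_pos rfl]
  have hprod : ∏ i ∈ (Finset.univ : Finset (Fin ℓ)).erase 0,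
      (if (i:ℕ) = 0 then 4*(ℓ:ℝ) else 2*ℓ) = (2*(ℓ:ℝ)) ^ (ℓ - 1) := by
    rw [Finset.prod_congr rfl (fun i hi => ?_), Finset.prod_const,
      Finset.card_erase_of_mem h0, Finset.card_univ, Fintype.card_fin]
    have : (i:ℕ) ≠ 0 := by
      intro hh
      exact (Finset.mem_erase.mp hi).1 (Fin.ext hh)
    rw [if_neg this]
  rw [hprod]
  have hp : (2*(ℓ:ℝ))^ℓ = (2*(ℓ:ℝ))^(ℓ-1) * (2*ℓ) := by
    rw [← pow_succ]; congr 1; omega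
  rw [hp]; ring
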